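/- Let A be a nonempty set, 1 ≤ p < ∞, let h : A → ℝ be absolutely summable (Σ_{a∈A} |h(a)| < ∞), and let S ⊆ A be a finite subset. Define g, f_S : ℓ∞(A) → ℝ by g(x) := |Σ_{a∈A} h(a)·|x(a)|^p|^{1/p} and f_S(x) := |Σ_{a∈S} h(a)·|x(a)|^p|^{1/p}. Then ‖g − f_S‖_{FBL^p} ≤ (Σ_{a∈A∖S} |h(a)|)^{1/p}. In particular, g can be approximated in the ‖·‖_{FBL^p}-norm by the functions f_S over finite S, so g belongs to the free p-convex Banach lattice FBL^(p)[ℓ₁(A)]. -/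

import Mathlib

open scoped ENNReal

/-- `‖f‖_{FBL^p}` for a function `f : ℓ∞(A) → ℝ` (with `ℓ∞(A)` realized as the dual of
`ℓ₁(A)`), with values in `[0,∞]`. -/
noncomputable def fblNormP (A : Type*) (p : ℝ) (f : lp (fun _ : A => ℝ) ∞ → ℝ) : ℝ≥0∞ :=
  ⨆ (m : ℕ) (x : Fin m → lp (fun _ : A => ℝ) ∞) (_ : ∀ a : A, ∑ i, |x i a| ^ p ≤ 1),
    ENNReal.ofReal ((∑ i, |f (x i)| ^ p) ^ (1 / p))

/-- Subadditivity of `t ↦ t ^ (1/p)` in difference form, for `p ≥ 1`. -/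
lemma abs_rpow_sub_rpow_le {p : ℝ} (hp : 1 ≤ p) (a b : ℝ) :
    |(|a| ^ (1 / p)) - |b| ^ (1 / p)| ≤ |a - b| ^ (1 / p) := by
  have hp0 : 0 < p := lt_of_lt_of_le one_pos hp
  have hq0 : 0 ≤ 1 / p := by positivity
  have hq1 : 1 / p ≤ 1 := by
    rw [div_le_one hp0]; exact hp
  have key : ∀ c d : ℝ, |c| ≤ |d| → |d| ^ (1 / p) - |c| ^ (1 / p) ≤ |d - c| ^ (1 / p) := by
    intro c d hcd
    have h1 : |d| ^ (1 / p) ≤ (|d| - |c|) ^ (1 / p) + |c| ^ (1 / p) := by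
      have h2 : ((|d| - |c|) + |c|) ^ (1 / p) ≤ (|d| - |c|) ^ (1 / p) + |c| ^ (1 / p) := by
        have hx : (0 : ℝ) ≤ |d| - |c| := sub_nonneg.2 hcd
        have := NNReal.rpow_add_le_add_rpow ⟨|d| - |c|, hx⟩ ⟨|c|, abs_nonneg c⟩ hq0 hq1
        have h3 := NNReal.coe_le_coe.2 this
        push_cast [NNReal.coe_rpow] at h3
        exact h3
      simpa [sub_add_cancel] using h2
    have h4 : (|d| - |c|) ^ (1 / p) ≤ |d - c| ^ (1 / p) :=
      Real.rpow_le_rpow (sub_nonneg.2 hcd) (abs_sub_abs_le_abs_sub d c) hq0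
    linarith
  rcases le_total (|b|) (|a|) with hba | hab
  · rw [abs_of_nonneg (sub_nonneg.2 (Real.rpow_le_rpow (abs_nonneg b) hba hq0))]
    exact key b a hba
  · rw [abs_of_nonpos (sub_nonpos.2 (Real.rpow_le_rpow (abs_nonneg a) hab hq0)), neg_sub,
      abs_sub_comm a b]
    exact key a b hab

set_option synthInstance.maxHeartbeats 1000000 in
/-- **Lemma.** For an absolutely summable `h : A → ℝ` and a finite `S ⊆ A`, the functions
`g(x) = |Σ_{a∈A} h(a)|x(a)|^p|^{1/p}` and `f_S(x) = |Σ_{a∈S} h(a)|x(a)|^p|^{1/p}` on `ℓ∞(A)`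
satisfy `‖g − f_S‖_{FBL^p} ≤ (Σ_{a∈A∖S} |h(a)|)^{1/p}`; in particular, `g` is approximated
in the `FBL^p`-norm by the functions `f_S` over finite sets `S`. -/
theorem gPhi_countable_sum_approx
    (A : Type*) [Nonempty A] (p : ℝ) (hp : 1 ≤ p)
    (h : A → ℝ) (hsum : Summable fun a => |h a|)
    (g : lp (fun _ : A => ℝ) ∞ → ℝ)
    (hg : ∀ x : lp (fun _ : A => ℝ) ∞, g x = |∑' a : A, h a * |x a| ^ p| ^ (1 / p))
    (fS : Finset A → lp (fun _ : A => ℝ) ∞ → ℝ)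
    (hfS : ∀ (S : Finset A) (x : lp (fun _ : A => ℝ) ∞),
      fS S x = |∑ a ∈ S, h a * |x a| ^ p| ^ (1 / p)) :
    (∀ S : Finset A,
      fblNormP A p (fun x => g x - fS S x) ≤
        ENNReal.ofReal ((∑' a : {a : A // a ∉ S}, |h a.1|) ^ (1 / p))) ∧
    ∀ ε : ℝ, 0 < ε → ∃ S : Finset A,
      fblNormP A p (fun x => g x - fS S x) ≤ ENNReal.ofReal ε := by
  have hp0 : 0 < p := lt_of_lt_of_le one_pos hp
  have hq0 : 0 ≤ 1 / p := by positivity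
  -- summability of the basic series for each x
  have hsummand : ∀ x : lp (fun _ : A => ℝ) ∞, Summable (fun a => h a * |x a| ^ p) := by
    intro x
    rw [← summable_abs_iff]
    refine Summable.of_nonneg_of_le (fun a => abs_nonneg _)
      (fun a => ?_) (hsum.mul_right (‖x‖ ^ p))
    rw [abs_mul, abs_of_nonneg (Real.rpow_nonneg (abs_nonneg _) p)]
    refine mul_le_mul_of_nonneg_left ?_ (abs_nonneg _)
    exact Real.rpow_le_rpow (abs_nonneg _)
      (by simpa using lp.norm_apply_le_norm (by simp) x a) hp0.le
  have hsummand_abs : ∀ x : lp (fun _ : A => ℝ) ∞,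
      Summable (fun a => |h a| * |x a| ^ p) := by
    intro x
    refine Summable.of_nonneg_of_le
      (fun a => mul_nonneg (abs_nonneg _) (Real.rpow_nonneg (abs_nonneg _) p))
      (fun a => ?_) (hsum.mul_right (‖x‖ ^ p))
    refine mul_le_mul_of_nonneg_left ?_ (abs_nonneg _)
    exact Real.rpow_le_rpow (abs_nonneg _)
      (by simpa using lp.norm_apply_le_norm (by simp) x a) hp0.le
  -- key pointwise bound
  have hpt : ∀ (S : Finset A) (x : lp (fun _ : A => ℝ) ∞),
      |g x - fS S x| ^ p ≤ ∑' a : {a : A // a ∉ S}, |h a.1| * |x a.1| ^ p := by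
    intro S x
    set a0 : ℝ := ∑' a : A, h a * |x a| ^ p
    set b0 : ℝ := ∑ a ∈ S, h a * |x a| ^ p
    have h1 : |g x - fS S x| ≤ |a0 - b0| ^ (1 / p) := by
      rw [hg, hfS]
      exact abs_rpow_sub_rpow_le hp a0 b0
    have h2 : |a0 - b0| ≤ ∑' a : {a : A // a ∉ S}, |h a.1| * |x a.1| ^ p := by
      have hd : a0 - b0 = ∑' a : {a : A // a ∉ S}, (h a.1 * |x a.1| ^ p) := by
        have := Summable.sum_add_tsum_subtype_compl (hsummand x) S
        simp only [a0, b0]; linarith [this]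
      rw [hd]
      have hs : Summable (fun a : {a : A // a ∉ S} => ‖h a.1 * |x a.1| ^ p‖) := by
        refine ((hsummand_abs x).subtype _).congr fun a => ?_
        simp [Real.norm_eq_abs, abs_mul, abs_of_nonneg (Real.rpow_nonneg (abs_nonneg _) p)]
      calc |∑' a : {a : A // a ∉ S}, (h a.1 * |x a.1| ^ p)|
          ≤ ∑' a : {a : A // a ∉ S}, ‖h a.1 * |x a.1| ^ p‖ := by
            simpa [Real.norm_eq_abs] using norm_tsum_le_tsum_norm hs
        _ = ∑' a : {a : A // a ∉ S}, |h a.1| * |x a.1| ^ p := by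
            refine tsum_congr fun a => ?_
            rw [Real.norm_eq_abs, abs_mul, abs_of_nonneg (Real.rpow_nonneg (abs_nonneg _) p)]
    calc |g x - fS S x| ^ p ≤ (|a0 - b0| ^ (1 / p)) ^ p :=
          Real.rpow_le_rpow (abs_nonneg _) h1 hp0.le
      _ = |a0 - b0| := by
          rw [← Real.rpow_mul (abs_nonneg _), one_div, inv_mul_cancel₀ hp0.ne', Real.rpow_one]
      _ ≤ _ := h2
  -- first part
  have main : ∀ S : Finset A,
      fblNormP A p (fun x => g x - fS S x) ≤
        ENNReal.ofReal ((∑' a : {a : A // a ∉ S}, |h a.1|) ^ (1 / p)) := by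
    intro S
    refine iSup_le fun m => iSup_le fun x => iSup_le fun hx => ?_
    refine ENNReal.ofReal_le_ofReal ?_
    refine Real.rpow_le_rpow (Finset.sum_nonneg fun i _ =>
      Real.rpow_nonneg (abs_nonneg _) p) ?_ hq0
    calc ∑ i, |g (x i) - fS S (x i)| ^ p
        ≤ ∑ i, ∑' a : {a : A // a ∉ S}, |h a.1| * |x i a.1| ^ p :=
          Finset.sum_le_sum fun i _ => hpt S (x i)
      _ = ∑' a : {a : A // a ∉ S}, ∑ i, |h a.1| * |x i a.1| ^ p := by
          exact (Summable.tsum_finsetSum fun i _ => (hsummand_abs (x i)).subtype _).symm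
      _ ≤ ∑' a : {a : A // a ∉ S}, |h a.1| := by
          refine Summable.tsum_le_tsum (fun a => ?_) ?_ (hsum.subtype _)
          · have e1 : ∑ i, |h a.1| * |x i a.1| ^ p = |h a.1| * ∑ i, |x i a.1| ^ p :=
              (Finset.mul_sum _ _ _).symm
            have e2 : |h a.1| * ∑ i, |x i a.1| ^ p ≤ |h a.1| * 1 :=
              mul_le_mul_of_nonneg_left (hx a.1) (abs_nonneg _)
            rw [e1]; simpa using e2
          · exact summable_sum fun i _ => (hsummand_abs (x i)).subtype _
  refine ⟨main, fun ε hε => ?_⟩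
  -- choose S with small tail
  have htail := tendsto_tsum_compl_atTop_zero (fun a : A => |h a|)
  have hεp : (0 : ℝ) < ε ^ p := Real.rpow_pos_of_pos hε p
  have := (tendsto_order.1 htail).2 _ hεp
  obtain ⟨S, hS⟩ := this.exists
  refine ⟨S, (main S).trans (ENNReal.ofReal_le_ofReal ?_)⟩
  have h0 : (0 : ℝ) ≤ ∑' a : {a : A // a ∉ S}, |h a.1| :=
    tsum_nonneg fun a => abs_nonneg _
  calc (∑' a : {a : A // a ∉ S}, |h a.1|) ^ (1 / p)
      ≤ (ε ^ p) ^ (1 / p) := Real.rpow_le_rpow h0 hS.le hq0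
    _ = ε := by
        rw [← Real.rpow_mul hε.le, mul_one_div, div_self hp0.ne', Real.rpow_one]
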